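/- Let a and n be positive integers with a ≤ 2^{n-1}, and suppose there exists at least one union-closed family of subsets of [n] in which every element lies in at most a sets and every element of [n] is a non-trivial twin difference. Then g_t(n, f_t(n,a)) = a. -/

import Mathlib

/-- A family of sets is union-closed if it contains the union of any two of its sets. -/
def UnionClosed (F : Finset (Finset ℕ)) : Prop :=
  ∀ S ∈ F, ∀ T ∈ F, S ∪ T ∈ F

/-- `F` is a family of subsets of `[n] = {0, …, n-1}` (modeled as `Finset.range n`). -/
def FamilyOn (n : ℕ) (F : Finset (Finset ℕ)) : Prop :=
  ∀ S ∈ F, S ⊆ Finset.range n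

/-- The degree of an element `e`: the number of sets of `F` containing `e`. -/
def degOf (F : Finset (Finset ℕ)) (e : ℕ) : ℕ :=
  (F.filter (fun S => e ∈ S)).card

/-- `franklF n a` is the maximum cardinality of a nonempty union-closed family of subsets
of `[n]` in which every element of `[n]` belongs to at most `a` sets. -/
noncomputable def franklF (n a : ℕ) : ℕ :=
  sSup {m | ∃ F : Finset (Finset ℕ), UnionClosed F ∧ FamilyOn n F ∧ F.Nonempty ∧
    (∀ e ∈ Finset.range n, degOf F e ≤ a) ∧ F.card = m}

/-- `franklG n m` is the minimum, over union-closed families of subsets of `[n]` with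
exactly `m` sets, of the maximum degree `max_{e ∈ [n]} |{S ∈ F : e ∈ S}|`. -/
noncomputable def franklG (n m : ℕ) : ℕ :=
  sInf {a | ∃ F : Finset (Finset ℕ), UnionClosed F ∧ FamilyOn n F ∧ F.card = m ∧
    (Finset.range n).sup (degOf F) = a}

/-- The number of twin pairs with twin difference `e`: sets `S ∈ F` with `e ∉ S`
and `S ∪ {e} ∈ F`. -/
def twinCount (F : Finset (Finset ℕ)) (e : ℕ) : ℕ :=
  (F.filter (fun S => e ∉ S ∧ insert e S ∈ F)).card

/-- `e` is a non-trivial twin difference in `F` (as a family of subsets of `[n]`):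
there is `S ∈ F` with `e ∉ S`, `S ∪ {e} ∈ F` and `S ∪ {e} ≠ [n]`. -/
def NonTrivialTwinDiff (n : ℕ) (F : Finset (Finset ℕ)) (e : ℕ) : Prop :=
  ∃ S ∈ F, e ∉ S ∧ insert e S ∈ F ∧ insert e S ≠ Finset.range n

/-- `franklFt n a`: maximum cardinality of a union-closed family of subsets of `[n]`
where every element of `[n]` lies in at most `a` sets and every element of `[n]` is a
non-trivial twin difference. -/
noncomputable def franklFt (n a : ℕ) : ℕ :=
  sSup {m | ∃ F : Finset (Finset ℕ), UnionClosed F ∧ FamilyOn n F ∧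
    (∀ e ∈ Finset.range n, degOf F e ≤ a) ∧
    (∀ e ∈ Finset.range n, NonTrivialTwinDiff n F e) ∧ F.card = m}

/-- `franklGt n m`: minimum of the maximum degree over union-closed families of subsets
of `[n]` with exactly `m` sets in which every element of `[n]` is a non-trivial twin
difference. -/
noncomputable def franklGt (n m : ℕ) : ℕ :=
  sInf {a | ∃ F : Finset (Finset ℕ), UnionClosed F ∧ FamilyOn n F ∧ F.card = m ∧
    (∀ e ∈ Finset.range n, NonTrivialTwinDiff n F e) ∧
    (Finset.range n).sup (degOf F) = a}

-- a family on [n] with low degrees misses some subset of range n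
lemma missing_set (n a : ℕ) (hn : 0 < n) (hpow : a ≤ 2 ^ (n - 1))
    (G : Finset (Finset ℕ)) (hd : degOf G 0 < a) :
    ((Finset.range n).powerset \ G).Nonempty := by
  rw [Finset.sdiff_nonempty]
  intro hsub
  -- sets containing 0 in the powerset inject from powerset of erase
  have hinj : ∀ S ∈ ((Finset.range n).erase 0).powerset, insert 0 S ∈ G.filter (fun S => 0 ∈ S) := by
    intro S hS
    rw [Finset.mem_powerset] at hS
    refine Finset.mem_filter.2 ⟨hsub ?_, Finset.mem_insert_self _ _⟩
    rw [Finset.mem_powerset]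
    exact Finset.insert_subset (Finset.mem_range.2 hn) (hS.trans (Finset.erase_subset _ _))
  have hcard : ((Finset.range n).erase 0).powerset.card ≤ (G.filter (fun S => 0 ∈ S)).card := by
    apply Finset.card_le_card_of_injOn (fun S => insert 0 S) hinj
    intro S hS T hT h
    rw [Finset.mem_coe, Finset.mem_powerset] at hS hT
    have h0S : 0 ∉ S := fun h0 => (Finset.mem_erase.1 (hS h0)).1 rfl
    have h0T : 0 ∉ T := fun h0 => (Finset.mem_erase.1 (hT h0)).1 rfl
    rw [← Finset.erase_insert h0S, ← Finset.erase_insert h0T]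
    exact congrArg (fun s => s.erase 0) h
  rw [Finset.card_powerset, Finset.card_erase_of_mem (Finset.mem_range.2 hn),
    Finset.card_range] at hcard
  exact absurd (hpow.trans hcard) (not_le.2 hd)

lemma extend_family (n a : ℕ) (hn : 0 < n) (hpow : a ≤ 2 ^ (n - 1))
    (G : Finset (Finset ℕ)) (hu : UnionClosed G) (hf : FamilyOn n G)
    (hd : ∀ e ∈ Finset.range n, degOf G e < a)
    (ht : ∀ e ∈ Finset.range n, NonTrivialTwinDiff n G e) :
    ∃ G' : Finset (Finset ℕ), UnionClosed G' ∧ FamilyOn n G' ∧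
      (∀ e ∈ Finset.range n, degOf G' e ≤ a) ∧
      (∀ e ∈ Finset.range n, NonTrivialTwinDiff n G' e) ∧ G'.card = G.card + 1 := by
  have hne := missing_set n a hn hpow G (hd 0 (Finset.mem_range.2 hn))
  obtain ⟨T, hTm⟩ := Finset.exists_maximal hne
  have hT : T ∈ (Finset.range n).powerset \ G := hTm.1
  have hTmax : ∀ U ∈ (Finset.range n).powerset \ G, ¬ T < U :=
    fun U hU hlt => lt_irrefl T (lt_of_lt_of_le hlt (hTm.2 hU hlt.le))
  rw [Finset.mem_sdiff, Finset.mem_powerset] at hT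
  obtain ⟨hTsub, hTG⟩ := hT
  -- any strict superset of T inside range n is in G
  have hsup : ∀ U : Finset ℕ, T ⊂ U → U ⊆ Finset.range n → U ∈ G := by
    intro U hTU hU
    by_contra hUG
    exact hTmax U (Finset.mem_sdiff.2 ⟨Finset.mem_powerset.2 hU, hUG⟩) hTU
  refine ⟨insert T G, ?_, ?_, ?_, ?_, Finset.card_insert_of_notMem hTG⟩
  · -- union closed
    intro S hS S' hS'
    rw [Finset.mem_insert] at hS hS' ⊢
    rcases hS with rfl | hS <;> rcases hS' with rfl | hS'
    · left; simp
    · by_cases h : S' ⊆ S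
      · left; rw [Finset.union_eq_left.2 h]
      · right
        exact hsup _ (Finset.ssubset_iff_of_subset Finset.subset_union_left |>.2
          (by obtain ⟨x, hx, hx2⟩ := Finset.not_subset.1 h;
              exact ⟨x, Finset.mem_union_right _ hx, hx2⟩))
          (Finset.union_subset hTsub (hf _ hS'))
    · by_cases h : S ⊆ S'
      · left; rw [Finset.union_eq_right.2 h]
      · right
        exact hsup _ (Finset.ssubset_iff_of_subset Finset.subset_union_right |>.2
          (by obtain ⟨x, hx, hx2⟩ := Finset.not_subset.1 h;
              exact ⟨x, Finset.mem_union_left _ hx, hx2⟩))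
          (Finset.union_subset (hf _ hS) hTsub)
    · right; exact hu _ hS _ hS'
  · intro S hS
    rcases Finset.mem_insert.1 hS with rfl | hS
    · exact hTsub
    · exact hf _ hS
  · intro e he
    have : degOf (insert T G) e ≤ degOf G e + 1 := by
      unfold degOf
      rw [Finset.filter_insert]
      split
      · exact (Finset.card_insert_le _ _)
      · exact Nat.le_succ_of_le le_rfl
    exact this.trans (Nat.succ_le_of_lt (hd e he))
  · intro e he
    obtain ⟨S, hS, h1, h2, h3⟩ := ht e he
    exact ⟨S, Finset.mem_insert_of_mem hS, h1, Finset.mem_insert_of_mem h2, h3⟩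

/-- `g_t(n, f_t(n,a)) = a` whenever `a ≤ 2^(n-1)` and `f_t(n,a)` is defined. -/
theorem franklGt_franklFt (a n : ℕ) (ha : 0 < a) (hn : 0 < n)
    (hpow : a ≤ 2 ^ (n - 1))
    (hex : ∃ F : Finset (Finset ℕ), UnionClosed F ∧ FamilyOn n F ∧
      (∀ e ∈ Finset.range n, degOf F e ≤ a) ∧
      (∀ e ∈ Finset.range n, NonTrivialTwinDiff n F e)) :
    franklGt n (franklFt n a) = a := by
  set Sf := {m | ∃ F : Finset (Finset ℕ), UnionClosed F ∧ FamilyOn n F ∧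
    (∀ e ∈ Finset.range n, degOf F e ≤ a) ∧
    (∀ e ∈ Finset.range n, NonTrivialTwinDiff n F e) ∧ F.card = m} with hSf
  have hbdd : BddAbove Sf := by
    refine ⟨2 ^ n, fun m hm => ?_⟩
    obtain ⟨F, _, hf, _, _, rfl⟩ := hm
    calc F.card ≤ (Finset.range n).powerset.card :=
          Finset.card_le_card (fun S hS => Finset.mem_powerset.2 (hf S hS))
      _ = 2 ^ n := by rw [Finset.card_powerset, Finset.card_range]
  have hnes : Sf.Nonempty := by
    obtain ⟨F, h1, h2, h3, h4⟩ := hex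
    exact ⟨F.card, F, h1, h2, h3, h4, rfl⟩
  have hmem : franklFt n a ∈ Sf := Nat.sSup_mem hnes hbdd
  obtain ⟨F₀, hu₀, hf₀, hd₀, ht₀, hc₀⟩ := hmem
  set m := franklFt n a with hm
  set Sg := {b | ∃ F : Finset (Finset ℕ), UnionClosed F ∧ FamilyOn n F ∧ F.card = m ∧
    (∀ e ∈ Finset.range n, NonTrivialTwinDiff n F e) ∧
    (Finset.range n).sup (degOf F) = b} with hSg
  have hgne : Sg.Nonempty :=
    ⟨(Finset.range n).sup (degOf F₀), F₀, hu₀, hf₀, hc₀, ht₀, rfl⟩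
  have hgmem : franklGt n m ∈ Sg := Nat.sInf_mem hgne
  obtain ⟨G, huG, hfG, hcG, htG, hsG⟩ := hgmem
  have hGEq : franklGt n m = sInf Sg := by rw [franklGt, hSg]
  apply le_antisymm
  · -- franklGt ≤ a
    have hb : (Finset.range n).sup (degOf F₀) ∈ Sg := ⟨F₀, hu₀, hf₀, hc₀, ht₀, rfl⟩
    calc franklGt n m = sInf Sg := hGEq
      _ ≤ (Finset.range n).sup (degOf F₀) := Nat.sInf_le hb
      _ ≤ a := Finset.sup_le hd₀
  · -- a ≤ franklGt
    by_contra hlt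
    push_neg at hlt
    have hdeg : ∀ e ∈ Finset.range n, degOf G e < a := by
      intro e he
      exact lt_of_le_of_lt (hsG ▸ Finset.le_sup he) hlt
    obtain ⟨G', h1, h2, h3, h4, h5⟩ := extend_family n a hn hpow G huG hfG hdeg htG
    have : m + 1 ∈ Sf := ⟨G', h1, h2, h3, h4, by rw [h5, hcG]⟩
    have hle := le_csSup hbdd this
    have hFEq : franklFt n a = sSup Sf := by rw [franklFt, hSf]
    omega
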